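/- (Monotonicity Law) Let w and w̃ be two symmetric nonnegative edge-weight functions on the same node set N = {1,…,n} with w̃_ij ≤ w_ij for all i, j, such that both induced random walks are irreducible and aperiodic. Let m_ij and m̃_ij denote the mean first passage times of the random walks with weights w and w̃ respectively, and let w = Σ_{i,j} w_ij and w̃ = Σ_{i,j} w̃_ij denote the total edge weights. Then for all nodes a, v: m_av + m_va ≤ (w/w̃)(m̃_av + m̃_va). -/

import Mathlib

open Matrix

noncomputable section

/-- transition matrix of the random walk on a weighted undirected graph:
`Z_ij = w_ij / Σ_k w_ik`. -/
def walkZ {V : Type*} [Fintype V] (w : V → V → ℝ) : Matrix V V ℝ :=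
  Matrix.of fun i j => w i j / ∑ k, w i k

/-- stationary distribution of the random walk: `π_i = (Σ_k w_ik)/w`, where
`w` is the total edge weight. -/
def statPi {V : Type*} [Fintype V] (w : V → V → ℝ) : V → ℝ :=
  fun i => (∑ k, w i k) / ∑ a, ∑ b, w a b

/-- the fundamental matrix `Y = Σ_{k=0}^∞ (Z^k − Z^∞)` of the random walk,
where `Z^∞ = e πᵀ`. -/
def walkY {V : Type*} [Fintype V] [DecidableEq V] (w : V → V → ℝ) : Matrix V V ℝ :=
  Matrix.of fun i j => ∑' k : ℕ, ((walkZ w ^ k) i j - statPi w j)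

/-- the mean first passage time `m_ij = (Y_jj − Y_ij)/π_j` from `i` to `j` of
the random walk on the weighted graph with weights `w`. -/
def walkM {V : Type*} [Fintype V] [DecidableEq V] (w : V → V → ℝ) (i j : V) : ℝ :=
  (walkY w j j - walkY w i j) / statPi w j


section Aux
variable {n : ℕ} {u : Fin n → Fin n → ℝ}

lemma deg_pos (hnn : ∀ i j, 0 ≤ u i j)
    (hprim : ∃ k : ℕ, 0 < k ∧ ∀ i j, 0 < (walkZ u ^ k) i j) (i : Fin n) :
    0 < ∑ k, u i k := by
  rcases (Finset.sum_nonneg fun k _ => hnn i k).lt_or_eq with h | h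
  · exact h
  · exfalso
    obtain ⟨k, hk, hpos⟩ := hprim
    have hzero : ∀ j, walkZ u i j = 0 := by
      intro j; simp [walkZ, ← h]
    have : (walkZ u ^ k) i i = 0 := by
      obtain ⟨k, rfl⟩ := Nat.exists_eq_succ_of_ne_zero hk.ne'
      rw [pow_succ']
      rw [Matrix.mul_apply]
      simp [hzero]
    exact (hpos i i).ne' this

lemma Z_nonneg (hnn : ∀ i j, 0 ≤ u i j) (i j : Fin n) : 0 ≤ walkZ u i j :=
  div_nonneg (hnn i j) (Finset.sum_nonneg fun k _ => hnn i k)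

lemma Z_row (hd : ∀ i, 0 < ∑ k, u i k) (i : Fin n) : ∑ j, walkZ u i j = 1 := by
  simp only [walkZ, Matrix.of_apply, ← Finset.sum_div]
  exact div_self (hd i).ne'

lemma Zpow_nonneg (hnn : ∀ i j, 0 ≤ u i j) (m : ℕ) (i j : Fin n) :
    0 ≤ (walkZ u ^ m) i j := by
  induction m generalizing i j with
  | zero => simp [Matrix.one_apply]; positivity
  | succ m ih =>
    rw [pow_succ, Matrix.mul_apply]
    exact Finset.sum_nonneg fun l _ => mul_nonneg (ih i l) (Z_nonneg hnn l j)

lemma Zpow_row (hd : ∀ i, 0 < ∑ k, u i k) (m : ℕ) (i : Fin n) :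
    ∑ j, (walkZ u ^ m) i j = 1 := by
  induction m generalizing i with
  | zero => simp [Matrix.one_apply]
  | succ m ih =>
    rw [pow_succ]
    simp only [Matrix.mul_apply]
    rw [Finset.sum_comm]
    calc ∑ l, ∑ j, (walkZ u ^ m) i l * walkZ u l j
        = ∑ l, (walkZ u ^ m) i l * ∑ j, walkZ u l j := by
          simp [Finset.mul_sum]
      _ = 1 := by simp only [Z_row hd, mul_one]; exact ih i


lemma tot_pos (hn : 0 < n) (hd : ∀ i, 0 < ∑ k, u i k) :
    0 < ∑ i, ∑ j, u i j := by
  haveI : NeZero n := ⟨hn.ne'⟩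
  exact Finset.sum_pos (fun i _ => hd i) ⟨⟨0, hn⟩, Finset.mem_univ _⟩

lemma pi_nonneg (hnn : ∀ i j, 0 ≤ u i j) (j : Fin n) : 0 ≤ statPi u j :=
  div_nonneg (Finset.sum_nonneg fun k _ => hnn j k)
    (Finset.sum_nonneg fun i _ => Finset.sum_nonneg fun k _ => hnn i k)

lemma pi_sum (hn : 0 < n) (hd : ∀ i, 0 < ∑ k, u i k) : ∑ j, statPi u j = 1 := by
  simp only [statPi, ← Finset.sum_div]
  exact div_self (tot_pos hn hd).ne'

lemma pi_stat (hsym : ∀ i j, u i j = u j i) (hd : ∀ i, 0 < ∑ k, u i k) (j : Fin n) :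
    ∑ l, statPi u l * walkZ u l j = statPi u j := by
  have : ∀ l, statPi u l * walkZ u l j = u l j / ∑ a, ∑ b, u a b := by
    intro l
    simp only [statPi, walkZ, Matrix.of_apply]
    rw [div_mul_div_comm, mul_comm (∑ a, ∑ b, u a b) _, mul_div_mul_left _ _ (hd l).ne']
  rw [Finset.sum_congr rfl fun l _ => this l, ← Finset.sum_div]
  have : ∑ l, u l j = ∑ l, u j l := by
    exact Finset.sum_congr rfl fun l _ => hsym l j
  rw [this]; rfl

lemma pi_statpow (hsym : ∀ i j, u i j = u j i) (hd : ∀ i, 0 < ∑ k, u i k) (m : ℕ) (j : Fin n) :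
    ∑ l, statPi u l * (walkZ u ^ m) l j = statPi u j := by
  induction m generalizing j with
  | zero => simp [Matrix.one_apply]
  | succ m ih =>
    rw [pow_succ]
    simp only [Matrix.mul_apply, Finset.mul_sum]
    rw [Finset.sum_comm]
    calc ∑ t, ∑ l, statPi u l * ((walkZ u ^ m) l t * walkZ u t j)
        = ∑ t, (∑ l, statPi u l * (walkZ u ^ m) l t) * walkZ u t j := by
          simp [Finset.sum_mul, mul_assoc]
      _ = ∑ t, statPi u t * walkZ u t j := by
          simp only [ih]
      _ = statPi u j := pi_stat hsym hd j


lemma osc_step {δ : ℝ} (P : Matrix (Fin n) (Fin n) ℝ)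
    (hδ : ∀ i l, δ ≤ P i l) (hrow : ∀ i, ∑ l, P i l = 1)
    {f : Fin n → ℝ} {m M : ℝ} (hm : ∀ k, m ≤ f k) (hM : ∀ k, f k ≤ M)
    (hn : 0 < n) (i i' : Fin n) :
    ∑ k, P i k * f k - ∑ k, P i' k * f k ≤ (1 - n * δ) * (M - m) := by
  have hMm : m ≤ M := (hm ⟨0, hn⟩).trans (hM ⟨0, hn⟩)
  have key : ∑ k, P i k * f k - ∑ k, P i' k * f k
      = ∑ k, (P i k - P i' k) * (f k - m) := by
    simp only [sub_mul, mul_sub, Finset.sum_sub_distrib, ← Finset.sum_mul, hrow]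
    ring
  rw [key]
  have step : ∀ k, (P i k - P i' k) * (f k - m)
      ≤ (P i k - min (P i k) (P i' k)) * (M - m) := by
    intro k
    rcases le_total (P i k) (P i' k) with h | h
    · rw [min_eq_left h, sub_self, zero_mul]
      exact mul_nonpos_of_nonpos_of_nonneg (sub_nonpos.2 h) (sub_nonneg.2 (hm k))
    · rw [min_eq_right h]
      exact mul_le_mul_of_nonneg_left (sub_le_sub_right (hM k) m) (sub_nonneg.2 h)
  calc ∑ k, (P i k - P i' k) * (f k - m)
      ≤ ∑ k, (P i k - min (P i k) (P i' k)) * (M - m) :=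
        Finset.sum_le_sum fun k _ => step k
    _ = (1 - ∑ k, min (P i k) (P i' k)) * (M - m) := by
        rw [← Finset.sum_mul, Finset.sum_sub_distrib, hrow]
    _ ≤ (1 - n * δ) * (M - m) := by
        apply mul_le_mul_of_nonneg_right _ (sub_nonneg.2 hMm)
        have h1 : (n : ℝ) * δ ≤ ∑ k, min (P i k) (P i' k) := by
          calc (n : ℝ) * δ = ∑ _k : Fin n, δ := by
                simp [Finset.sum_const, Finset.card_univ, nsmul_eq_mul]
            _ ≤ ∑ k, min (P i k) (P i' k) :=
                Finset.sum_le_sum fun k _ => le_min (hδ i k) (hδ i' k)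
        linarith

def colMax (u : Fin n → Fin n → ℝ) (hn : 0 < n) (j : Fin n) (m : ℕ) : ℝ :=
  Finset.univ.sup' ⟨⟨0, hn⟩, Finset.mem_univ _⟩ fun i => (walkZ u ^ m) i j

def colMin (u : Fin n → Fin n → ℝ) (hn : 0 < n) (j : Fin n) (m : ℕ) : ℝ :=
  Finset.univ.inf' ⟨⟨0, hn⟩, Finset.mem_univ _⟩ fun i => (walkZ u ^ m) i j

lemma le_colMax (hn : 0 < n) (j : Fin n) (m : ℕ) (i : Fin n) :
    (walkZ u ^ m) i j ≤ colMax u hn j m := by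
  unfold colMax; exact Finset.le_sup' (fun i => (walkZ u ^ m) i j) (Finset.mem_univ i)

lemma colMin_le (hn : 0 < n) (j : Fin n) (m : ℕ) (i : Fin n) :
    colMin u hn j m ≤ (walkZ u ^ m) i j := by
  unfold colMin; exact Finset.inf'_le (fun i => (walkZ u ^ m) i j) (Finset.mem_univ i)

lemma osc_contract {δ : ℝ} {P : Matrix (Fin n) (Fin n) ℝ}
    (hδ : ∀ i l, δ ≤ P i l) (hrow : ∀ i, ∑ l, P i l = 1)
    (hn : 0 < n) (j : Fin n) (m m' : ℕ)
    (hP : walkZ u ^ m' = P * walkZ u ^ m) :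
    colMax u hn j m' - colMin u hn j m'
      ≤ (1 - n * δ) * (colMax u hn j m - colMin u hn j m) := by
  obtain ⟨i₁, -, h₁⟩ := Finset.exists_mem_eq_sup'
    (⟨⟨0, hn⟩, Finset.mem_univ _⟩ : (Finset.univ : Finset (Fin n)).Nonempty)
    (fun i => (walkZ u ^ m') i j)
  obtain ⟨i₀, -, h₀⟩ := Finset.exists_mem_eq_inf'
    (⟨⟨0, hn⟩, Finset.mem_univ _⟩ : (Finset.univ : Finset (Fin n)).Nonempty)
    (fun i => (walkZ u ^ m') i j)
  unfold colMax colMin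
  rw [h₁, h₀, hP, Matrix.mul_apply, Matrix.mul_apply]
  exact osc_step P hδ hrow (colMin_le hn j m) (le_colMax hn j m) hn i₁ i₀


lemma osc_nonneg (hn : 0 < n) (j : Fin n) (m : ℕ) :
    0 ≤ colMax u hn j m - colMin u hn j m :=
  sub_nonneg.2 ((colMin_le hn j m ⟨0, hn⟩).trans (le_colMax hn j m ⟨0, hn⟩))

lemma osc_le_one (hnn : ∀ i j, 0 ≤ u i j) (hd : ∀ i, 0 < ∑ k, u i k)
    (hn : 0 < n) (j : Fin n) : ∀ m, colMax u hn j m - colMin u hn j m ≤ 1 := by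
  intro m
  induction m with
  | zero =>
    have h1 : colMax u hn j 0 ≤ 1 := by
      unfold colMax
      apply Finset.sup'_le
      intro i _
      simp only [pow_zero, Matrix.one_apply]
      split <;> norm_num
    have h0 : 0 ≤ colMin u hn j 0 := by
      unfold colMin
      apply Finset.le_inf'
      intro i _
      simp only [pow_zero, Matrix.one_apply]
      split <;> norm_num
    linarith
  | succ m ih =>
    have := osc_contract (δ := 0) (P := walkZ u)
      (fun i l => Z_nonneg hnn i l) (Z_row hd) hn j m (m + 1) (pow_succ' _ _)
    simpa using this.trans (by simpa using ih)

lemma osc_decay {δ : ℝ} {r : ℕ} (hnn : ∀ i j, 0 ≤ u i j) (hd : ∀ i, 0 < ∑ k, u i k)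
    (hn : 0 < n) (hr : 0 < r) (hδ : ∀ i l, δ ≤ (walkZ u ^ r) i l)
    (hθ0 : 0 ≤ 1 - n * δ) (j : Fin n) :
    ∀ m, colMax u hn j m - colMin u hn j m ≤ (1 - n * δ) ^ (m / r) := by
  intro m
  induction m using Nat.strong_induction_on with
  | _ m ih =>
    by_cases h : m < r
    · rw [Nat.div_eq_of_lt h, pow_zero]
      exact osc_le_one hnn hd hn j m
    · push_neg at h
      have hP : walkZ u ^ m = walkZ u ^ r * walkZ u ^ (m - r) := by
        rw [← pow_add, Nat.add_sub_cancel' h]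
      have step := osc_contract (δ := δ) (P := walkZ u ^ r)
        hδ (Zpow_row hd r) hn j (m - r) m hP
      have hsub : m - r < m := Nat.sub_lt (hr.trans_le h) hr
      have := ih (m - r) hsub
      calc colMax u hn j m - colMin u hn j m
          ≤ (1 - n * δ) * (colMax u hn j (m - r) - colMin u hn j (m - r)) := step
        _ ≤ (1 - n * δ) * (1 - n * δ) ^ ((m - r) / r) :=
            mul_le_mul_of_nonneg_left this hθ0
        _ = (1 - n * δ) ^ (m / r) := by
            rw [Nat.div_eq_sub_div hr h, pow_succ]
            ring

lemma pi_bracket (hsym : ∀ i j, u i j = u j i) (hnn : ∀ i j, 0 ≤ u i j)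
    (hd : ∀ i, 0 < ∑ k, u i k) (hn : 0 < n) (j : Fin n) (m : ℕ) :
    colMin u hn j m ≤ statPi u j ∧ statPi u j ≤ colMax u hn j m := by
  have hrepr : statPi u j = ∑ l, statPi u l * (walkZ u ^ m) l j :=
    (pi_statpow hsym hd m j).symm
  have hπ1 : ∑ l, statPi u l = 1 := pi_sum hn hd
  constructor
  · calc colMin u hn j m = ∑ l, statPi u l * colMin u hn j m := by
          rw [← Finset.sum_mul, hπ1, one_mul]
      _ ≤ ∑ l, statPi u l * (walkZ u ^ m) l j :=
          Finset.sum_le_sum fun l _ =>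
            mul_le_mul_of_nonneg_left (colMin_le hn j m l) (pi_nonneg hnn l)
      _ = statPi u j := hrepr.symm
  · calc statPi u j = ∑ l, statPi u l * (walkZ u ^ m) l j := hrepr
      _ ≤ ∑ l, statPi u l * colMax u hn j m :=
          Finset.sum_le_sum fun l _ =>
            mul_le_mul_of_nonneg_left (le_colMax hn j m l) (pi_nonneg hnn l)
      _ = colMax u hn j m := by rw [← Finset.sum_mul, hπ1, one_mul]

lemma abs_bound (hsym : ∀ i j, u i j = u j i) (hnn : ∀ i j, 0 ≤ u i j)
    (hd : ∀ i, 0 < ∑ k, u i k) (hn : 0 < n) (i j : Fin n) (m : ℕ) :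
    |(walkZ u ^ m) i j - statPi u j| ≤ colMax u hn j m - colMin u hn j m := by
  obtain ⟨h1, h2⟩ := pi_bracket hsym hnn hd hn j m
  have h3 := le_colMax (u := u) hn j m i
  have h4 := colMin_le (u := u) hn j m i
  rw [abs_le]
  constructor <;> [linarith; linarith]

lemma summable_pow_div {θ : ℝ} (h0 : 0 ≤ θ) (h1 : θ < 1) {r : ℕ} (hr : 0 < r) :
    Summable fun m : ℕ => θ ^ (m / r) := by
  haveI : NeZero r := ⟨hr.ne'⟩
  have hgeo : Summable fun k : ℕ => θ ^ k := summable_geometric_of_lt_one h0 h1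
  have hone : Summable fun _ : Fin r => (1 : ℝ) := Summable.of_finite
  have h2 : Summable fun p : ℕ × Fin r => θ ^ p.1 := by
    have := hgeo.mul_of_nonneg hone (fun k => pow_nonneg h0 k) (fun _ => zero_le_one)
    simpa using this
  have h3 := (Nat.divModEquiv r).summable_iff.mpr h2
  exact h3.congr fun m => rfl

lemma summable_walk (hsym : ∀ i j, u i j = u j i) (hnn : ∀ i j, 0 ≤ u i j)
    (hprim : ∃ k : ℕ, 0 < k ∧ ∀ i j, 0 < (walkZ u ^ k) i j)
    (hn : 0 < n) (i j : Fin n) :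
    Summable fun m : ℕ => (walkZ u ^ m) i j - statPi u j := by
  have hd : ∀ i, 0 < ∑ k, u i k := deg_pos hnn hprim
  obtain ⟨r, hr, hpos⟩ := hprim
  set δ : ℝ := Finset.univ.inf'
    ⟨(⟨0, hn⟩, ⟨0, hn⟩), Finset.mem_univ _⟩
    (fun p : Fin n × Fin n => (walkZ u ^ r) p.1 p.2) with hδdef
  have hδle : ∀ a b, δ ≤ (walkZ u ^ r) a b := fun a b =>
    Finset.inf'_le (fun p : Fin n × Fin n => (walkZ u ^ r) p.1 p.2)
      (Finset.mem_univ (a, b))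
  have hδpos : 0 < δ := by
    obtain ⟨p, -, hp⟩ := Finset.exists_mem_eq_inf'
      (⟨(⟨0, hn⟩, ⟨0, hn⟩), Finset.mem_univ _⟩ :
        (Finset.univ : Finset (Fin n × Fin n)).Nonempty)
      (fun p : Fin n × Fin n => (walkZ u ^ r) p.1 p.2)
    rw [hδdef, hp]
    exact hpos p.1 p.2
  have hθ0 : 0 ≤ 1 - n * δ := by
    have hrow := Zpow_row hd r ⟨0, hn⟩
    have : (n : ℝ) * δ ≤ 1 := by
      calc (n : ℝ) * δ = ∑ _l : Fin n, δ := by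
            simp [Finset.sum_const, Finset.card_univ, nsmul_eq_mul]
        _ ≤ ∑ l, (walkZ u ^ r) ⟨0, hn⟩ l := Finset.sum_le_sum fun l _ => hδle _ l
        _ = 1 := hrow
    linarith
  have hθ1 : 1 - n * δ < 1 := by
    have : 0 < (n : ℝ) * δ :=
      mul_pos (by exact_mod_cast hn) hδpos
    linarith
  apply Summable.of_norm_bounded (summable_pow_div hθ0 hθ1 hr)
  intro m
  rw [Real.norm_eq_abs]
  exact (abs_bound hsym hnn hd hn i j m).trans
    (osc_decay hnn hd hn hr hδle hθ0 j m)

lemma tsum_sub_succ {a : ℕ → ℝ} (h : Summable a) : ∑' m, (a m - a (m + 1)) = a 0 := by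
  have hs : Summable fun m => a m - a (m + 1) := h.sub ((summable_nat_add_iff 1).2 h)
  have h1 := hs.hasSum.tendsto_sum_nat
  have h2 : Filter.Tendsto (fun M => ∑ m ∈ Finset.range M, (a m - a (m + 1)))
      Filter.atTop (nhds (a 0)) := by
    simp only [Finset.sum_range_sub' a]
    simpa using tendsto_const_nhds.sub h.tendsto_atTop_zero
  exact tendsto_nhds_unique h1 h2

lemma key_inverse (hsym : ∀ i j, u i j = u j i) (hnn : ∀ i j, 0 ≤ u i j)
    (hprim : ∃ k : ℕ, 0 < k ∧ ∀ i j, 0 < (walkZ u ^ k) i j) (hn : 0 < n) :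
    (1 - walkZ u + Matrix.of fun _ j => statPi u j) *
      (walkY u + Matrix.of fun _ j => statPi u j) = 1 := by
  have hd : ∀ i, 0 < ∑ k, u i k := deg_pos hnn hprim
  set E : Matrix (Fin n) (Fin n) ℝ := Matrix.of fun _ j => statPi u j with hE
  set N : Matrix (Fin n) (Fin n) ℝ := 1 - walkZ u + E with hN
  have hNrow : ∀ i, ∑ l, N i l = 1 := by
    intro i
    simp only [hN, Matrix.add_apply, Matrix.sub_apply, Finset.sum_add_distrib,
      Finset.sum_sub_distrib]
    rw [Z_row hd i]
    have : ∑ l, E i l = 1 := by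
      simp only [hE, Matrix.of_apply]
      exact pi_sum hn hd
    rw [this]
    simp [Matrix.one_apply]
  have hNY : N * walkY u = 1 - E := by
    ext i j
    rw [Matrix.mul_apply]
    have hsumm : ∀ l, Summable fun m : ℕ => (walkZ u ^ m) l j - statPi u j :=
      fun l => summable_walk hsym hnn hprim hn l j
    have hterm : ∀ m : ℕ, ∑ l, N i l * ((walkZ u ^ m) l j - statPi u j)
        = ((walkZ u ^ m) i j - statPi u j)
          - ((walkZ u ^ (m + 1)) i j - statPi u j) := by
      intro m
      have e1 : ∑ l, (1 : Matrix (Fin n) (Fin n) ℝ) i l * ((walkZ u ^ m) l j - statPi u j)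
          = (walkZ u ^ m) i j - statPi u j := by
        simp [Matrix.one_apply, ite_mul]
      have e2 : ∑ l, walkZ u i l * ((walkZ u ^ m) l j - statPi u j)
          = (walkZ u ^ (m + 1)) i j - statPi u j := by
        simp only [mul_sub, Finset.sum_sub_distrib, ← Finset.sum_mul, Z_row hd i, one_mul]
        congr 1
        rw [pow_succ', Matrix.mul_apply]
      have e3 : ∑ l, E i l * ((walkZ u ^ m) l j - statPi u j) = 0 := by
        simp only [hE, Matrix.of_apply, mul_sub, Finset.sum_sub_distrib,
          ← Finset.sum_mul, pi_statpow hsym hd m j, pi_sum hn hd, one_mul, sub_self]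
      calc ∑ l, N i l * ((walkZ u ^ m) l j - statPi u j)
          = ∑ l, ((1 : Matrix (Fin n) (Fin n) ℝ) i l * ((walkZ u ^ m) l j - statPi u j)
              - walkZ u i l * ((walkZ u ^ m) l j - statPi u j)
              + E i l * ((walkZ u ^ m) l j - statPi u j)) := by
            refine Finset.sum_congr rfl fun l _ => ?_
            simp only [hN, Matrix.add_apply, Matrix.sub_apply]
            ring
        _ = _ := by
            rw [Finset.sum_add_distrib, Finset.sum_sub_distrib, e1, e2, e3]
            ring
    calc ∑ l, N i l * walkY u l j
        = ∑ l, ∑' m : ℕ, N i l * ((walkZ u ^ m) l j - statPi u j) := by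
          refine Finset.sum_congr rfl fun l _ => ?_
          rw [walkY, Matrix.of_apply, ← tsum_mul_left]
      _ = ∑' m : ℕ, ∑ l, N i l * ((walkZ u ^ m) l j - statPi u j) :=
          (Summable.tsum_finsetSum fun l _ => (hsumm l).mul_left _).symm
      _ = ∑' m : ℕ, (((walkZ u ^ m) i j - statPi u j)
            - ((walkZ u ^ (m + 1)) i j - statPi u j)) := tsum_congr hterm
      _ = (walkZ u ^ 0) i j - statPi u j := by
          rw [tsum_sub_succ (hsumm i)]
      _ = (1 - E) i j := by
          simp [Matrix.sub_apply, hE, Matrix.one_apply]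
  have hNE : N * E = E := by
    ext i j
    rw [Matrix.mul_apply]
    simp only [hE, Matrix.of_apply]
    rw [← Finset.sum_mul, hNrow, one_mul]
  rw [Matrix.mul_add, hNY, hNE, sub_add_cancel]

lemma commute_formula (hsym : ∀ i j, u i j = u j i) (hnn : ∀ i j, 0 ≤ u i j)
    (hprim : ∃ k : ℕ, 0 < k ∧ ∀ i j, 0 < (walkZ u ^ k) i j) (hn : 0 < n)
    (a v : Fin n) :
    ∃ y : Fin n → ℝ,
      (∀ i, (∑ k, u i k) * y i - ∑ l, u i l * y l
          = (if i = a then (1 : ℝ) else 0) - (if i = v then 1 else 0)) ∧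
      walkM u a v + walkM u v a = (∑ i, ∑ j, u i j) * (y a - y v) := by
  have hd : ∀ i, 0 < ∑ k, u i k := deg_pos hnn hprim
  have hW : 0 < ∑ i, ∑ j, u i j := tot_pos hn hd
  set E : Matrix (Fin n) (Fin n) ℝ := Matrix.of fun _ j => statPi u j with hE
  set N : Matrix (Fin n) (Fin n) ℝ := 1 - walkZ u + E with hN
  set q : Fin n → ℝ := fun i => (if i = a then (1 : ℝ) else 0) - (if i = v then 1 else 0)
    with hq
  set g : Fin n → ℝ := fun l => q l / ∑ k, u l k with hg
  set y : Fin n → ℝ := (walkY u + E) *ᵥ g with hy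
  have hNy : N *ᵥ y = g := by
    rw [hy, Matrix.mulVec_mulVec, key_inverse hsym hnn hprim hn, Matrix.one_mulVec]
  -- entrywise identity
  have hNy' : ∀ i, y i - (∑ l, walkZ u i l * y l) + (∑ l, statPi u l * y l)
      = q i / ∑ k, u i k := by
    intro i
    have := congrFun hNy i
    rw [Matrix.mulVec, dotProduct] at this
    calc y i - (∑ l, walkZ u i l * y l) + (∑ l, statPi u l * y l)
        = ∑ l, N i l * y l := by
          have e1 : ∑ l, (1 : Matrix (Fin n) (Fin n) ℝ) i l * y l = y i := by
            simp [Matrix.one_apply, ite_mul]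
          calc y i - (∑ l, walkZ u i l * y l) + (∑ l, statPi u l * y l)
              = ∑ l, ((1 : Matrix (Fin n) (Fin n) ℝ) i l * y l - walkZ u i l * y l
                  + statPi u l * y l) := by
                rw [Finset.sum_add_distrib, Finset.sum_sub_distrib, e1]
            _ = ∑ l, N i l * y l := by
                refine Finset.sum_congr rfl fun l _ => ?_
                simp only [hN, Matrix.add_apply, Matrix.sub_apply, hE, Matrix.of_apply]
                ring
      _ = q i / ∑ k, u i k := this
  set c : ℝ := ∑ l, statPi u l * y l with hc
  have hLy : ∀ i, (∑ k, u i k) * y i - ∑ l, u i l * y l = q i - c * ∑ k, u i k := by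
    intro i
    have h := hNy' i
    have h2 := congrArg (fun t => (∑ k, u i k) * t) h
    rw [mul_div_cancel₀ _ (hd i).ne'] at h2
    calc (∑ k, u i k) * y i - ∑ l, u i l * y l
        = (∑ k, u i k) * (y i - (∑ l, walkZ u i l * y l) + c) - c * ∑ k, u i k := by
          rw [mul_add, mul_sub]
          have : (∑ k, u i k) * ∑ l, walkZ u i l * y l = ∑ l, u i l * y l := by
            rw [Finset.mul_sum]
            refine Finset.sum_congr rfl fun l _ => ?_
            simp only [walkZ, Matrix.of_apply]
            field_simp
            rw [mul_assoc]; exact mul_div_cancel_left₀ _ (hd i).ne'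
          rw [this]
          ring
      _ = q i - c * ∑ k, u i k := by rw [h2]
  have hc0 : c = 0 := by
    have hsum : ∑ i, ((∑ k, u i k) * y i - ∑ l, u i l * y l) = 0 := by
      rw [Finset.sum_sub_distrib]
      have h1 : ∑ i, ∑ l, u i l * y l = ∑ l, (∑ i, u i l) * y l := by
        rw [Finset.sum_comm]
        exact Finset.sum_congr rfl fun l _ => (Finset.sum_mul _ _ _).symm
      have h2 : ∀ l, (∑ i, u i l) = ∑ k, u l k :=
        fun l => Finset.sum_congr rfl fun i _ => hsym i l
      have h1' : ∑ l, (∑ i, u i l) * y l = ∑ l, (∑ k, u l k) * y l :=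
        Finset.sum_congr rfl fun l _ => by rw [h2 l]
      rw [h1, h1', sub_self]
    have hsum2 : ∑ i, (q i - c * ∑ k, u i k) = - (c * ∑ i, ∑ k, u i k) := by
      rw [Finset.sum_sub_distrib]
      have : ∑ i, q i = 0 := by simp [hq]
      rw [this, ← Finset.mul_sum]
      ring
    rw [Finset.sum_congr rfl fun i _ => hLy i, hsum2] at hsum
    have h0 := neg_eq_zero.mp hsum
    exact (mul_eq_zero.mp h0).resolve_right hW.ne'
  refine ⟨y, fun i => by rw [hLy i, hc0]; ring, ?_⟩
  -- value of y at a point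
  have hyval : ∀ i, y i = (walkY u i a + statPi u a) / (∑ k, u a k)
      - (walkY u i v + statPi u v) / (∑ k, u v k) := by
    intro i
    rw [hy, Matrix.mulVec, dotProduct]
    have key : ∀ b : Fin n,
        ∑ l, (walkY u i l + statPi u l) * ((if l = b then (1 : ℝ) else 0) / ∑ k, u l k)
          = (walkY u i b + statPi u b) / ∑ k, u b k := by
      intro b
      rw [Finset.sum_eq_single b (fun l _ hl => by simp [hl])
        (fun h => absurd (Finset.mem_univ b) h)]
      simp [div_eq_mul_inv]
    have hterm : ∀ l, (walkY u + E) i l * g l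
        = (walkY u i l + statPi u l) * ((if l = a then (1 : ℝ) else 0) / ∑ k, u l k)
          - (walkY u i l + statPi u l) * ((if l = v then (1 : ℝ) else 0) / ∑ k, u l k) := by
      intro l
      simp only [hg, hq, Matrix.add_apply, hE, Matrix.of_apply, sub_div]
      ring
    rw [Finset.sum_congr rfl fun l _ => hterm l, Finset.sum_sub_distrib, key a, key v]
  -- final formula
  rw [hyval a, hyval v]
  unfold walkM statPi
  have h1 : (∑ k, u a k) ≠ 0 := (hd a).ne'
  have h2 : (∑ k, u v k) ≠ 0 := (hd v).ne'
  have h3 : (∑ i, ∑ j, u i j) ≠ 0 := hW.ne'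
  field_simp
  ring
end Aux

def lapQ {n : ℕ} (c : Fin n → Fin n → ℝ) (x z : Fin n → ℝ) : ℝ :=
  ∑ i, x i * ((∑ k, c i k) * z i - ∑ l, c i l * z l)

lemma lapQ_expand {n : ℕ} (c : Fin n → Fin n → ℝ) (x z : Fin n → ℝ) :
    lapQ c x z = (∑ i, (∑ k, c i k) * (x i * z i)) - ∑ i, ∑ j, c i j * x i * z j := by
  unfold lapQ
  rw [← Finset.sum_sub_distrib]
  refine Finset.sum_congr rfl fun i _ => ?_
  calc x i * ((∑ k, c i k) * z i - ∑ l, c i l * z l)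
      = (∑ k, c i k) * (x i * z i) - x i * ∑ l, c i l * z l := by ring
    _ = (∑ k, c i k) * (x i * z i) - ∑ j, c i j * x i * z j := by
        rw [Finset.mul_sum]
        congr 1
        exact Finset.sum_congr rfl fun j _ => by ring

lemma lapQ_sym {n : ℕ} (c : Fin n → Fin n → ℝ) (hc : ∀ i j, c i j = c j i)
    (x z : Fin n → ℝ) : lapQ c x z = lapQ c z x := by
  rw [lapQ_expand, lapQ_expand]
  congr 1
  · exact Finset.sum_congr rfl fun i _ => by ring
  · rw [Finset.sum_comm]
    exact Finset.sum_congr rfl fun j _ => Finset.sum_congr rfl fun i _ => by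
      rw [hc i j]; ring

lemma lapQ_quad {n : ℕ} (c : Fin n → Fin n → ℝ) (hc : ∀ i j, c i j = c j i)
    (y : Fin n → ℝ) :
    lapQ c y y = (1 / 2) * ∑ i, ∑ j, c i j * (y i - y j) ^ 2 := by
  have h1 : lapQ c y y = (∑ i, ∑ j, c i j * y i ^ 2) - ∑ i, ∑ j, c i j * y i * y j := by
    unfold lapQ
    rw [← Finset.sum_sub_distrib]
    refine Finset.sum_congr rfl fun i _ => ?_
    rw [mul_sub, Finset.sum_mul, Finset.mul_sum, Finset.mul_sum]
    congr 1
    · exact Finset.sum_congr rfl fun j _ => by ring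
    · exact Finset.sum_congr rfl fun j _ => by ring
  have h3 : ∑ i, ∑ j, c i j * y j ^ 2 = ∑ i, ∑ j, c i j * y i ^ 2 := by
    rw [Finset.sum_comm]
    exact Finset.sum_congr rfl fun j _ => Finset.sum_congr rfl fun i _ => by rw [hc i j]
  have h2 : ∑ i, ∑ j, c i j * (y i - y j) ^ 2
      = (∑ i, ∑ j, c i j * y i ^ 2) - 2 * (∑ i, ∑ j, c i j * y i * y j)
        + ∑ i, ∑ j, c i j * y j ^ 2 := by
    have e : ∀ i j, c i j * (y i - y j) ^ 2
        = c i j * y i ^ 2 - 2 * (c i j * y i * y j) + c i j * y j ^ 2 := fun i j => by ring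
    calc ∑ i, ∑ j, c i j * (y i - y j) ^ 2
        = ∑ i, ((∑ j, c i j * y i ^ 2) - 2 * (∑ j, c i j * y i * y j)
            + ∑ j, c i j * y j ^ 2) := by
          refine Finset.sum_congr rfl fun i _ => ?_
          rw [Finset.sum_congr rfl fun j _ => e i j, Finset.sum_add_distrib,
            Finset.sum_sub_distrib, ← Finset.mul_sum]
      _ = _ := by
          rw [Finset.sum_add_distrib, Finset.sum_sub_distrib, ← Finset.mul_sum]
  rw [h1, h2, h3]
  ring

lemma lapQ_sub {n : ℕ} (c : Fin n → Fin n → ℝ) (x z : Fin n → ℝ) :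
    lapQ c (fun i => x i - z i) (fun i => x i - z i)
      = lapQ c x x - lapQ c x z - lapQ c z x + lapQ c z z := by
  unfold lapQ
  rw [← Finset.sum_sub_distrib, ← Finset.sum_sub_distrib, ← Finset.sum_add_distrib]
  refine Finset.sum_congr rfl fun i _ => ?_
  have e1 : ∑ l, c i l * (x l - z l) = (∑ l, c i l * x l) - ∑ l, c i l * z l := by
    rw [← Finset.sum_sub_distrib]
    exact Finset.sum_congr rfl fun l _ => by ring
  rw [e1]
  ring

theorem stmt_18 {n : ℕ}
    (w wt : Fin n → Fin n → ℝ)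
    (hsym : ∀ i j, w i j = w j i) (hsymt : ∀ i j, wt i j = wt j i)
    (hnonneg : ∀ i j, 0 ≤ wt i j)
    (hle : ∀ i j, wt i j ≤ w i j)
    -- both induced random walks are irreducible and aperiodic (primitive)
    (hprim : ∃ k : ℕ, 0 < k ∧ ∀ i j, 0 < (walkZ w ^ k) i j)
    (hprimt : ∃ k : ℕ, 0 < k ∧ ∀ i j, 0 < (walkZ wt ^ k) i j) :
    ∀ a v : Fin n, walkM w a v + walkM w v a ≤
      ((∑ i, ∑ j, w i j) / (∑ i, ∑ j, wt i j)) * (walkM wt a v + walkM wt v a) := by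
  intro a v
  have hn : 0 < n := a.pos
  have hnnw : ∀ i j, 0 ≤ w i j := fun i j => (hnonneg i j).trans (hle i j)
  obtain ⟨y, hLy, hMy⟩ := commute_formula (u := w) hsym hnnw hprim hn a v
  obtain ⟨z, hLz, hMz⟩ := commute_formula (u := wt) hsymt hnonneg hprimt hn a v
  have hdw : ∀ i, 0 < ∑ k, w i k := deg_pos hnnw hprim
  have hdt : ∀ i, 0 < ∑ k, wt i k := deg_pos hnonneg hprimt
  have hWw : 0 < ∑ i, ∑ j, w i j := tot_pos hn hdw
  have hWt : 0 < ∑ i, ∑ j, wt i j := tot_pos hn hdt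
  have hq : ∀ f : Fin n → ℝ,
      ∑ i, f i * ((if i = a then (1 : ℝ) else 0) - (if i = v then 1 else 0))
        = f a - f v := by
    intro f
    simp [mul_sub, Finset.sum_sub_distrib, mul_ite, mul_one, mul_zero,
      Finset.sum_ite_eq']
  have h1 : lapQ w y y = y a - y v := by
    unfold lapQ
    have e : ∀ i, y i * ((∑ k, w i k) * y i - ∑ l, w i l * y l)
        = y i * ((if i = a then (1 : ℝ) else 0) - (if i = v then 1 else 0)) := by
      intro i
      rw [hLy i]
    rw [Finset.sum_congr rfl fun i _ => e i]
    exact hq y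
  have h2 : lapQ wt z z = z a - z v := by
    unfold lapQ
    have e : ∀ i, z i * ((∑ k, wt i k) * z i - ∑ l, wt i l * z l)
        = z i * ((if i = a then (1 : ℝ) else 0) - (if i = v then 1 else 0)) := by
      intro i
      rw [hLz i]
    rw [Finset.sum_congr rfl fun i _ => e i]
    exact hq z
  have h3 : lapQ wt y z = y a - y v := by
    unfold lapQ
    have e : ∀ i, y i * ((∑ k, wt i k) * z i - ∑ l, wt i l * z l)
        = y i * ((if i = a then (1 : ℝ) else 0) - (if i = v then 1 else 0)) := by
      intro i
      rw [hLz i]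
    rw [Finset.sum_congr rfl fun i _ => e i]
    exact hq y
  have h4 : lapQ wt z y = y a - y v := by
    rw [lapQ_sym wt hsymt z y]; exact h3
  have h5 : lapQ wt y y ≤ lapQ w y y := by
    rw [lapQ_quad wt hsymt y, lapQ_quad w hsym y]
    apply mul_le_mul_of_nonneg_left _ (by norm_num)
    exact Finset.sum_le_sum fun i _ => Finset.sum_le_sum fun j _ =>
      mul_le_mul_of_nonneg_right (hle i j) (sq_nonneg _)
  have h6 : 0 ≤ lapQ wt (fun i => y i - z i) (fun i => y i - z i) := by
    rw [lapQ_quad wt hsymt]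
    apply mul_nonneg (by norm_num)
    exact Finset.sum_nonneg fun i _ => Finset.sum_nonneg fun j _ =>
      mul_nonneg (hnonneg i j) (sq_nonneg _)
  rw [lapQ_sub, h3, h4, h2] at h6
  have hkey : y a - y v ≤ z a - z v := by
    have h5' := h5
    rw [h1] at h5'
    linarith
  rw [hMy, hMz]
  have hstep : (∑ i, ∑ j, w i j) * (y a - y v) ≤ (∑ i, ∑ j, w i j) * (z a - z v) :=
    mul_le_mul_of_nonneg_left hkey hWw.le
  have hrhs : (∑ i, ∑ j, w i j) / (∑ i, ∑ j, wt i j)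
      * ((∑ i, ∑ j, wt i j) * (z a - z v))
      = (∑ i, ∑ j, w i j) * (z a - z v) := by
    field_simp
  rw [hrhs]
  exact hstep
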